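/- For all positive integers n and all integers k with |k| ≤ n, one has C(2n, n+k) ≤ (4^n / √(π n)) · exp(-k²/n + 23/(36n)). -/

import Mathlib

open Real

lemma cubic_le_exp {x : ℝ} (hx : 0 ≤ x) : 1 + x + x^2/2 + x^3/6 ≤ Real.exp x := by
  have h := Real.sum_le_exp_of_nonneg hx 4
  simp [Finset.sum_range_succ, Nat.factorial] at h
  nlinarith [h]

lemma lemA {t : ℝ} (h0 : 0 ≤ t) (h1 : t ≤ 1) :
    (1 - t) * Real.exp (2*t + 2*(t^3/3)) ≤ 1 + t := by
  set g : ℝ → ℝ := fun s => (1+s) * Real.exp (-(2*s + 2*(s^3/3))) - (1-s) with hg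
  have hderiv : ∀ s : ℝ, HasDerivAt g
      ((1 * Real.exp (-(2*s + 2*(s^3/3))) + (1+s) * (Real.exp (-(2*s + 2*(s^3/3))) * (-(2 + 2*s^2)))) - (-1)) s := by
    intro s
    have hu : HasDerivAt (fun s : ℝ => 2*s + 2*(s^3/3)) (2 + 2*s^2) s := by
      have h := ((hasDerivAt_id s).const_mul (2:ℝ)).add (((hasDerivAt_pow 3 s).div_const 3).const_mul 2)
      exact h.congr_deriv (by push_cast; ring)
    have h3 := (((hasDerivAt_id s).const_add (1:ℝ)).mul hu.neg.exp).sub ((hasDerivAt_id s).const_sub (1:ℝ))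
    exact h3
  have hmono : MonotoneOn g (Set.Ici (0:ℝ)) := by
    apply monotoneOn_of_deriv_nonneg (convex_Ici 0)
    · exact fun s _ => (hderiv s).differentiableAt.continuousAt.continuousWithinAt
    · exact fun s _ => (hderiv s).differentiableAt.differentiableWithinAt
    · intro s hs
      rw [interior_Ici] at hs
      rw [(hderiv s).deriv]
      have hs0 : (0:ℝ) ≤ s := le_of_lt hs
      have hu0 : (0:ℝ) ≤ 2*s + 2*(s^3/3) := by positivity
      have hpoly : 1+2*s+2*s^2+2*s^3 ≤ Real.exp (2*s+2*(s^3/3)) := by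
        have h := cubic_le_exp hu0
        nlinarith [pow_nonneg hs0 4, pow_nonneg hs0 5, pow_nonneg hs0 6, pow_nonneg hs0 7, pow_nonneg hs0 9]
      have hkey : (1+2*s+2*s^2+2*s^3) * Real.exp (-(2*s + 2*(s^3/3))) ≤ 1 := by
        calc (1+2*s+2*s^2+2*s^3) * Real.exp (-(2*s + 2*(s^3/3)))
            ≤ Real.exp (2*s+2*(s^3/3)) * Real.exp (-(2*s + 2*(s^3/3))) :=
              mul_le_mul_of_nonneg_right hpoly (Real.exp_nonneg _)
          _ = 1 := by
              rw [← Real.exp_add, show (2*s+2*(s^3/3)) + -(2*s + 2*(s^3/3)) = 0 by ring, Real.exp_zero]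
      nlinarith [hkey, Real.exp_nonneg (-(2*s + 2*(s^3/3)))]
  have h00 : g 0 = 0 := by simp [hg]
  have hgt : 0 ≤ g t := by
    have := hmono (Set.self_mem_Ici) (Set.mem_Ici.mpr h0) h0
    rw [h00] at this; exact this
  have h2 : 1 - t ≤ (1+t) * Real.exp (-(2*t + 2*(t^3/3))) := by
    simp only [hg] at hgt; linarith
  calc (1-t) * Real.exp (2*t + 2*(t^3/3))
      ≤ ((1+t) * Real.exp (-(2*t + 2*(t^3/3)))) * Real.exp (2*t + 2*(t^3/3)) :=
        mul_le_mul_of_nonneg_right h2 (Real.exp_nonneg _)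
    _ = (1+t) * (Real.exp (-(2*t + 2*(t^3/3))) * Real.exp (2*t + 2*(t^3/3))) := by ring
    _ = 1 + t := by
        rw [← Real.exp_add, show -(2*t + 2*(t^3/3)) + (2*t + 2*(t^3/3)) = 0 by ring, Real.exp_zero, mul_one]


lemma sqrtpi_le_stirling (n : ℕ) (hn : 1 ≤ n) : Real.sqrt π ≤ Stirling.stirlingSeq n := by
  obtain ⟨m, rfl⟩ := Nat.exists_eq_add_of_le hn
  have hT : Filter.Tendsto (Stirling.stirlingSeq ∘ Nat.succ) Filter.atTop (nhds (Real.sqrt π)) := by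
    rw [Function.comp_def]
    exact (Filter.tendsto_add_atTop_iff_nat 1).mpr Stirling.tendsto_stirlingSeq_sqrt_pi
  have := Stirling.stirlingSeq'_antitone.le_of_tendsto hT m
  simpa [Nat.succ_eq_add_one, Nat.add_comm] using this

lemma stirling_pos (n : ℕ) (hn : 1 ≤ n) : 0 < Stirling.stirlingSeq n := by
  obtain ⟨m, rfl⟩ := Nat.exists_eq_add_of_le hn
  simpa [show 1 + m = m + 1 by omega] using Stirling.stirlingSeq'_pos m

lemma central_le (n : ℕ) (hn : 1 ≤ n) :
    ((2*n).choose n : ℝ) * (Real.sqrt π * Real.sqrt n) ≤ 4 ^ n := by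
  have h1 : Real.sqrt π ≤ Stirling.stirlingSeq n := sqrtpi_le_stirling n hn
  have h2 : Stirling.stirlingSeq (2*n) ≤ Stirling.stirlingSeq n := by
    obtain ⟨m, rfl⟩ := Nat.exists_eq_add_of_le hn
    have := Stirling.stirlingSeq'_antitone (a := m) (b := 2*(1+m)-1) (by omega)
    simpa [Nat.succ_eq_add_one, show m + 1 = 1 + m by omega,
      show 2*(1+m)-1+1 = 2*(1+m) by omega] using this
  have hnR : (0:ℝ) < n := by exact_mod_cast hn
  have hfac : ((2*n).choose n : ℝ) * (Nat.factorial n : ℝ) * (Nat.factorial n : ℝ)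
      = (Nat.factorial (2*n) : ℝ) := by
    have h := Nat.choose_mul_factorial_mul_factorial (show n ≤ 2*n by omega)
    rw [show 2*n-n = n by omega] at h
    exact_mod_cast congrArg (Nat.cast : ℕ → ℝ) h
  have hid : Stirling.stirlingSeq (2*n) =
      ((2*n).choose n : ℝ) * Real.sqrt n / 4 ^ n * (Stirling.stirlingSeq n)^2 := by
    unfold Stirling.stirlingSeq
    push_cast
    rw [show (2*(2*(n:ℝ))) = (2:ℝ)^2 * n by ring,
      Real.sqrt_mul (by positivity), Real.sqrt_sq (by norm_num)]
    have hsn : (0:ℝ) < Real.sqrt n := Real.sqrt_pos.mpr hnR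
    have hde : ((n:ℝ)/Real.exp 1) ^ n ≠ 0 := by positivity
    have h2e : (2*(n:ℝ)/Real.exp 1) ^ (2*n) = 4^n * (((n:ℝ)/Real.exp 1)^n)^2 := by
      rw [show (2*(n:ℝ)/Real.exp 1) = 2 * ((n:ℝ)/Real.exp 1) by ring, mul_pow,
        pow_mul' ((n:ℝ)/Real.exp 1) 2 n, pow_mul 2 2 n]
      norm_num
    rw [h2e, ← hfac]
    have hsq : Real.sqrt (2*(n:ℝ)) ≠ 0 := by positivity
    field_simp
    ring_nf
    rw [Real.sq_sqrt (by positivity), Real.sq_sqrt (by positivity)]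
    ring
  have hspos : 0 < Stirling.stirlingSeq n := stirling_pos n hn
  have hs2npos : 0 < Stirling.stirlingSeq (2*n) := stirling_pos (2*n) (by omega)
  have key : Real.sqrt π * Stirling.stirlingSeq (2*n) ≤
      Stirling.stirlingSeq n * Stirling.stirlingSeq n :=
    mul_le_mul h1 h2 hs2npos.le hspos.le
  rw [hid] at key
  have hF : (0:ℝ) < (4:ℝ)^n := by positivity
  have hs2 : (0:ℝ) < (Stirling.stirlingSeq n)^2 := pow_pos hspos 2
  have key2 : ((2*n).choose n : ℝ) * (Real.sqrt π * Real.sqrt n) * (Stirling.stirlingSeq n)^2 / 4^n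
      ≤ (Stirling.stirlingSeq n)^2 := by
    calc ((2*n).choose n : ℝ) * (Real.sqrt π * Real.sqrt n) * (Stirling.stirlingSeq n)^2 / 4^n
        = Real.sqrt π * (((2*n).choose n : ℝ) * Real.sqrt n / 4 ^ n * (Stirling.stirlingSeq n)^2) := by
          ring
      _ ≤ Stirling.stirlingSeq n * Stirling.stirlingSeq n := key
      _ = (Stirling.stirlingSeq n)^2 := by ring
  rw [div_le_iff₀ hF] at key2
  have key3 : ((2*n).choose n : ℝ) * (Real.sqrt π * Real.sqrt n) * (Stirling.stirlingSeq n)^2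
      ≤ 4^n * (Stirling.stirlingSeq n)^2 := by linarith
  exact le_of_mul_le_mul_right (by linarith) hs2



lemma ratio_le (n : ℕ) (hn : 1 ≤ n) : ∀ j : ℕ, j ≤ n →
    ((2*n).choose (n+j) : ℝ) *
      Real.exp ((j:ℝ)^2/((n:ℝ)+1/2) + (j:ℝ)^2*(2*(j:ℝ)^2-1)/(12*((n:ℝ)+1/2)^3))
    ≤ ((2*n).choose n : ℝ) := by
  intro j
  induction j with
  | zero => norm_num
  | succ j ih =>
    intro hj1
    have hj : j ≤ n := by omega
    have ihj := ih hj
    set m : ℝ := (n:ℝ) + 1/2 with hm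
    have hm0 : (0:ℝ) < m := by have : (0:ℝ) ≤ n := Nat.cast_nonneg n; rw [hm]; linarith
    set a : ℝ := (j:ℝ) + 1/2 with ha
    have ha0 : (0:ℝ) ≤ a := by have : (0:ℝ) ≤ j := Nat.cast_nonneg j; rw [ha]; linarith
    have hjn : (j:ℝ) + 1 ≤ (n:ℝ) := by exact_mod_cast hj1
    have ham : a ≤ m := by rw [ha, hm]; linarith
    -- key analytic step
    have key : ((n:ℝ) - j) * Real.exp (2*a/m + 2*(a^3/(3*m^3))) ≤ (n:ℝ) + j + 1 := by
      have ht0 : 0 ≤ a/m := div_nonneg ha0 hm0.le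
      have ht1 : a/m ≤ 1 := (div_le_one hm0).mpr ham
      have hA := lemA ht0 ht1
      have harg : 2*(a/m) + 2*((a/m)^3/3) = 2*a/m + 2*(a^3/(3*m^3)) := by
        field_simp
      rw [harg] at hA
      have := mul_le_mul_of_nonneg_left hA hm0.le
      calc ((n:ℝ) - j) * Real.exp (2*a/m + 2*(a^3/(3*m^3)))
          = (m * (1 - a/m)) * Real.exp (2*a/m + 2*(a^3/(3*m^3))) := by
            rw [mul_one_sub, mul_div_cancel₀ _ hm0.ne']; rw [hm, ha]; ring_nf
        _ = m * ((1 - a/m) * Real.exp (2*a/m + 2*(a^3/(3*m^3)))) := by ring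
        _ ≤ m * (1 + a/m) := this
        _ = m + a := by rw [mul_one_add, mul_div_cancel₀ _ hm0.ne']
        _ = (n:ℝ) + j + 1 := by rw [hm, ha]; ring
    -- exponent identity
    have hexp : ((j:ℝ)+1)^2/m + ((j:ℝ)+1)^2*(2*((j:ℝ)+1)^2-1)/(12*m^3)
        = ((j:ℝ)^2/m + (j:ℝ)^2*(2*(j:ℝ)^2-1)/(12*m^3)) + (2*a/m + 2*(a^3/(3*m^3))) := by
      rw [ha]; field_simp; ring
    -- nat choose identity
    have hcn : ((2*n).choose (n+j+1) : ℝ) * ((n:ℝ)+j+1) = ((2*n).choose (n+j) : ℝ) * ((n:ℝ) - j) := by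
      have h := Nat.choose_succ_right_eq (2*n) (n+j)
      rw [show 2*n - (n+j) = n - j by omega] at h
      have := congrArg (Nat.cast : ℕ → ℝ) h
      push_cast [Nat.cast_sub hj] at this
      linarith [this]
    have hpos1 : (0:ℝ) < (n:ℝ)+j+1 := by positivity
    have hcexp : (0:ℝ) ≤ ((2*n).choose (n+j) : ℝ) *
        Real.exp ((j:ℝ)^2/m + (j:ℝ)^2*(2*(j:ℝ)^2-1)/(12*m^3)) := by positivity
    -- main chain, multiplied by (n+j+1)
    have main : ((2*n).choose (n+j+1) : ℝ) *
        Real.exp (((j:ℝ)+1)^2/m + ((j:ℝ)+1)^2*(2*((j:ℝ)+1)^2-1)/(12*m^3)) * ((n:ℝ)+j+1)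
        ≤ ((2*n).choose n : ℝ) * ((n:ℝ)+j+1) := by
      calc ((2*n).choose (n+j+1) : ℝ) *
            Real.exp (((j:ℝ)+1)^2/m + ((j:ℝ)+1)^2*(2*((j:ℝ)+1)^2-1)/(12*m^3)) * ((n:ℝ)+j+1)
          = (((2*n).choose (n+j+1) : ℝ) * ((n:ℝ)+j+1)) *
            (Real.exp ((j:ℝ)^2/m + (j:ℝ)^2*(2*(j:ℝ)^2-1)/(12*m^3)) *
             Real.exp (2*a/m + 2*(a^3/(3*m^3)))) := by
            rw [hexp, Real.exp_add]; ring
        _ = (((2*n).choose (n+j) : ℝ) * Real.exp ((j:ℝ)^2/m + (j:ℝ)^2*(2*(j:ℝ)^2-1)/(12*m^3))) *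
            (((n:ℝ) - j) * Real.exp (2*a/m + 2*(a^3/(3*m^3)))) := by
            rw [hcn]; ring
        _ ≤ (((2*n).choose (n+j) : ℝ) * Real.exp ((j:ℝ)^2/m + (j:ℝ)^2*(2*(j:ℝ)^2-1)/(12*m^3))) *
            ((n:ℝ)+j+1) := mul_le_mul_of_nonneg_left key hcexp
        _ ≤ ((2*n).choose n : ℝ) * ((n:ℝ)+j+1) := mul_le_mul_of_nonneg_right ihj hpos1.le
    have := le_of_mul_le_mul_right (by linarith [main] :
      ((2*n).choose (n+j+1) : ℝ) *
        Real.exp (((j:ℝ)+1)^2/m + ((j:ℝ)+1)^2*(2*((j:ℝ)+1)^2-1)/(12*m^3)) * ((n:ℝ)+j+1)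
        ≤ ((2*n).choose n : ℝ) * ((n:ℝ)+j+1)) hpos1
    push_cast
    rw [show n + (j + 1) = n + j + 1 by omega]
    exact this


lemma compare_aux (n : ℕ) (hn : 1 ≤ n) (x : ℝ) (hx0 : 0 ≤ x) (hx1 : n = 1 → x ≤ 1) :
    x/(n:ℝ) - 23/(36*(n:ℝ)) ≤ x/((n:ℝ)+1/2) + x*(2*x-1)/(12*((n:ℝ)+1/2)^3) := by
  have hN : (1:ℝ) ≤ (n:ℝ) := by exact_mod_cast hn
  have hN0 : (0:ℝ) < (n:ℝ) := by linarith
  set N : ℝ := (n:ℝ) with hNdef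
  set m : ℝ := N + 1/2 with hmdef
  have hm0 : (0:ℝ) < m := by rw [hmdef]; linarith
  have key : 0 ≤ 48*N^2*x^2 - 24*N*(6*m^2+N)*x + 184*N*m^3 := by
    rcases eq_or_ne n 1 with h1 | h1
    · have hx1' := hx1 h1
      have : N = 1 := by rw [hNdef, h1]; norm_num
      rw [hmdef, this]
      nlinarith [hx0, hx1', sq_nonneg x]
    · have h3 : 2 ≤ n := by omega
      have h2 : (2:ℝ) ≤ N := by
        rw [hNdef]
        exact_mod_cast h3
      have hrem : 0 ≤ 184*N*m^3 - 3*(6*m^2+N)^2 := by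
        rw [hmdef]
        nlinarith [sq_nonneg N, sq_nonneg (N-2), pow_pos hN0 3, pow_pos hN0 4,
          mul_pos (mul_pos hN0 hN0) hN0]
      nlinarith [sq_nonneg (4*N*x - (6*m^2+N)), hrem]
  have heq : x/m + x*(2*x-1)/(12*m^3) - (x/N - 23/(36*N))
      = (48*N^2*x^2 - 24*N*(6*m^2+N)*x + 184*N*m^3)/(288*N^2*m^3) := by
    field_simp
    ring
  have := div_nonneg key (by positivity : (0:ℝ) ≤ 288*N^2*m^3)
  linarith [heq ▸ this]


theorem stmt1 (n : ℕ) (hn : 0 < n) (k : ℤ) (hk : |k| ≤ (n : ℤ)) :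
    (((2 * n : ℤ).toNat.choose ((n : ℤ) + k).toNat : ℝ)) ≤
      4 ^ n / Real.sqrt (Real.pi * n) * Real.exp (-(k : ℝ) ^ 2 / n + 23 / (36 * n)) := by
  have hn1 : 1 ≤ n := hn
  set j : ℕ := k.natAbs with hjdef
  have hkabs : |k| = (j:ℤ) := Int.abs_eq_natAbs k
  have hjn : j ≤ n := by
    have : (j:ℤ) ≤ (n:ℤ) := hkabs ▸ hk
    exact_mod_cast this
  have hchoose : ((2 * n : ℤ).toNat).choose (((n:ℤ) + k).toNat) = (2*n).choose (n + j) := by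
    have h2n : ((2 * n : ℤ)).toNat = 2*n := by omega
    rcases Int.natAbs_eq k with hk' | hk'
    · have h3 : ((n:ℤ) + k).toNat = n + j := by omega
      rw [h2n, h3]
    · have h3 : ((n:ℤ) + k).toNat = n - j := by omega
      rw [h2n, h3]
      rw [← show 2*n - (n+j) = n - j by omega]
      exact Nat.choose_symm (by omega)
  have hk2 : (k:ℝ)^2 = (j:ℝ)^2 := by
    have h4 : ((j:ℕ):ℝ) = |(k:ℝ)| := by
      rw [hjdef, ← Int.cast_natCast, Int.natCast_natAbs]
      exact Int.cast_abs
    rw [h4, sq_abs]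
  rw [hchoose, hk2]
  set m : ℝ := (n:ℝ) + 1/2 with hmdef
  set E : ℝ := (j:ℝ)^2/m + (j:ℝ)^2*(2*(j:ℝ)^2-1)/(12*m^3) with hEdef
  have hRL : ((2*n).choose (n+j) : ℝ) * Real.exp E ≤ ((2*n).choose n : ℝ) := ratio_le n hn1 j hjn
  have h1 : ((2*n).choose (n+j) : ℝ) ≤ ((2*n).choose n : ℝ) * Real.exp (-E) := by
    have h := mul_le_mul_of_nonneg_right hRL (Real.exp_nonneg (-E))
    rwa [mul_assoc, ← Real.exp_add, add_neg_cancel, Real.exp_zero, mul_one] at h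
  have hsppos : (0:ℝ) < Real.sqrt π * Real.sqrt n := by
    have h5 : (0:ℝ) < (n:ℝ) := by exact_mod_cast hn
    positivity
  have h2 : ((2*n).choose n : ℝ) ≤ 4^n / (Real.sqrt π * Real.sqrt n) :=
    (le_div_iff₀ hsppos).mpr (central_le n hn1)
  have hcomp := compare_aux n hn1 ((j:ℝ)^2) (by positivity) (by
    intro h
    subst h
    have : j ≤ 1 := hjn
    interval_cases j <;> norm_num)
  have h3 : Real.exp (-E) ≤ Real.exp (-(j:ℝ)^2/(n:ℝ) + 23/(36*(n:ℝ))) := by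
    apply Real.exp_le_exp.mpr
    rw [hEdef, hmdef]
    have h6 : -(j:ℝ)^2/(n:ℝ) = -((j:ℝ)^2/(n:ℝ)) := by ring
    rw [h6]
    linarith [hcomp]
  have hsqrtmul : Real.sqrt (π * n) = Real.sqrt π * Real.sqrt n :=
    Real.sqrt_mul Real.pi_pos.le n
  calc ((2*n).choose (n+j) : ℝ)
      ≤ ((2*n).choose n : ℝ) * Real.exp (-E) := h1
    _ ≤ (4^n / (Real.sqrt π * Real.sqrt n)) * Real.exp (-E) :=
        mul_le_mul_of_nonneg_right h2 (Real.exp_nonneg _)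
    _ ≤ (4^n / (Real.sqrt π * Real.sqrt n)) * Real.exp (-(j:ℝ)^2/(n:ℝ) + 23/(36*(n:ℝ))) :=
        mul_le_mul_of_nonneg_left h3 (by positivity)
    _ = 4 ^ n / Real.sqrt (π * n) * Real.exp (-(j:ℝ) ^ 2 / n + 23 / (36 * n)) := by
        rw [hsqrtmul]
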